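/- Let N ≥ 2 and N/2 < K < N be integers. For every function g : (ℤ/Nℤ) × Γ_{K,2K−N} → ℝ and every pair (x,η) with η ∈ ℰ_{N,K} and η_x = 1, the intertwining identity holds: L^{tag}(g ∘ Φ̃)(x,η) = (L^{c}g)(Φ̃(x,η)). -/

import Mathlib

open scoped Classical BigOperators

noncomputable section

/-- A particle configuration on the discrete circle `ℤ/Mℤ`. -/
abbrev Conf (M : ℕ) := ZMod M → Bool

/-- Number of occupied sites (particles) of a configuration. -/
def numParticles {M : ℕ} [NeZero M] (η : Conf M) : ℕ :=
  (Finset.univ.filter fun x => η x = true).card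

/-- Ergodicity: every pair of neighbouring sites carries at least one particle. -/
def isErgodic {M : ℕ} (η : Conf M) : Prop :=
  ∀ x : ZMod M, η x = true ∨ η (x + 1) = true

/-- The configuration `η` with the values at `x` and `y` exchanged. -/
def swapConf {α : Type*} [DecidableEq α] (η : α → Bool) (x y : α) : α → Bool :=
  fun z => if z = x then η y else if z = y then η x else η z

/-- The representative of `k ∈ ℤ/Kℤ` in `{1, …, K}`. -/
def repOne {K : ℕ} [NeZero K] (k : ZMod K) : ℕ :=
  if k.val = 0 then K else k.val

/-- `Σ_{y=1}^{x} η_y`, the number of particles among sites `1, …, x`. -/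
def countUpTo {N : ℕ} (η : Conf N) (x : ℕ) : ℕ :=
  ∑ y ∈ Finset.Icc 1 x, (if η ((y : ℕ) : ZMod N) = true then 1 else 0)

/-- `x_k(η) ∈ {1, …, N}`: the position of the `k`-th particle of `η`. -/
def pos {N K : ℕ} [NeZero K] (η : Conf N) (k : ZMod K) : ℕ :=
  sInf {x : ℕ | 1 ≤ x ∧ x ≤ N ∧ countUpTo η x = repOne k}

/-- The clockwise distance `d(a,b) ∈ {1, …, M}` from `a` to `b` on `ℤ/Mℤ`. -/
def cdist {M : ℕ} [NeZero M] (a b : ZMod M) : ℕ :=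
  if (b - a).val = 0 then M else (b - a).val

/-- The (integer) value `σ^{(k,η)}_l = 2 − d(x_{k+l−1}(η), x_{k+l}(η))`. -/
def sigmaVal {N K : ℕ} [NeZero N] [NeZero K] (η : Conf N) (k l : ZMod K) : ℤ :=
  2 - (cdist ((pos η (k + l - 1) : ℕ) : ZMod N) ((pos η (k + l) : ℕ) : ZMod N) : ℤ)

/-- The SSEP configuration `σ^{(k,η)}`, occupied at `l` iff `σ^{(k,η)}_l = 1`. -/
def sigmaConf {N K : ℕ} [NeZero N] [NeZero K] (η : Conf N) (k : ZMod K) : Conf K :=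
  fun l => decide (cdist ((pos η (k + l - 1) : ℕ) : ZMod N) ((pos η (k + l) : ℕ) : ZMod N) = 1)

/-- The representative of `x ∈ ℤ/Nℤ` in `{1, …, N}`. -/
def repN {M : ℕ} [NeZero M] (x : ZMod M) : ℕ :=
  if x.val = 0 then M else x.val

/-- The rank `r(x,η) = Σ_{y=1}^{x̄} η_y mod K` of the occupied site `x` in `η`. -/
def rankOf (K : ℕ) {N : ℕ} [NeZero N] (x : ZMod N) (η : Conf N) : ZMod K :=
  ((countUpTo η (repN x) : ℕ) : ZMod K)

/-- The tagged-particle FEP generator, acting on functions of (tagged position, configuration). -/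
def Ltag {N : ℕ} [NeZero N] (f : ZMod N × Conf N → ℝ) (x : ZMod N) (η : Conf N) : ℝ :=
  (∑ y ∈ Finset.univ.filter (fun y : ZMod N => y ≠ x), ∑ s : Bool,
    (if η y = true ∧ η (y - (if s then 1 else -1)) = true
        ∧ η (y + (if s then 1 else -1)) = false
      then f (x, swapConf η y (y + (if s then 1 else -1))) - f (x, η) else 0))
  + ∑ s : Bool,
    (if η (x - (if s then 1 else -1)) = true ∧ η (x + (if s then 1 else -1)) = false
      then f (x + (if s then 1 else -1), swapConf η x (x + (if s then 1 else -1))) - f (x, η)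
      else 0)

/-- The generator of the SSEP on `ℤ/Kℤ` together with its current through the edge `(K,1)`,
tracked additively in `ℤ/Nℤ`. -/
def Lc {N K : ℕ} [NeZero N] [NeZero K] (g : ZMod N × Conf K → ℝ) (x : ZMod N) (σ : Conf K) : ℝ :=
  (∑ k ∈ Finset.Ico 1 K,
    (g (x, swapConf σ ((k : ℕ) : ZMod K) (((k + 1 : ℕ) : ℕ) : ZMod K)) - g (x, σ)))
  + (g (x + ((((if σ ((K : ℕ) : ZMod K) = true then 1 else 0)
          - (if σ ((1 : ℕ) : ZMod K) = true then 1 else 0) : ℤ)) : ZMod N),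
        swapConf σ ((K : ℕ) : ZMod K) ((1 : ℕ) : ZMod K)) - g (x, σ))

section Aux
set_option linter.unusedSectionVars false

variable {N K : ℕ} [NeZero N] [NeZero K]

lemma repN_le (x : ZMod N) : 1 ≤ repN x ∧ repN x ≤ N := by
  unfold repN
  have := ZMod.val_lt x
  split <;> omega

lemma repN_cast {a : ℕ} (h1 : 1 ≤ a) (h2 : a ≤ N) : repN ((a : ℕ) : ZMod N) = a := by
  unfold repN
  rw [ZMod.val_natCast]
  rcases eq_or_lt_of_le h2 with h | h
  · subst h; simp [Nat.mod_self]
  · rw [Nat.mod_eq_of_lt h]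
    split <;> omega

lemma cast_repN (x : ZMod N) : ((repN x : ℕ) : ZMod N) = x := by
  unfold repN
  split
  · next h => rw [ZMod.natCast_self]; exact ((ZMod.val_eq_zero x).mp h).symm
  · exact ZMod.natCast_rightInverse x

lemma cast_inj_on {a b : ℕ} (ha1 : 1 ≤ a) (ha2 : a ≤ N) (hb1 : 1 ≤ b) (hb2 : b ≤ N)
    (h : ((a : ℕ) : ZMod N) = ((b : ℕ) : ZMod N)) : a = b := by
  have := repN_cast (N := N) ha1 ha2
  have := repN_cast (N := N) hb1 hb2
  rw [h] at *
  omega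

end Aux
section Aux2
set_option linter.unusedSectionVars false

variable {N K : ℕ} [NeZero N] [NeZero K]

lemma countUpTo_zero (η : Conf N) : countUpTo η 0 = 0 := by
  simp [countUpTo]

lemma countUpTo_succ (η : Conf N) (x : ℕ) :
    countUpTo η (x + 1) = countUpTo η x + (if η (((x + 1 : ℕ) : ZMod N)) = true then 1 else 0) := by
  unfold countUpTo
  rw [Finset.sum_Icc_succ_top (by omega)]

lemma countUpTo_mono (η : Conf N) : Monotone (countUpTo η) := by
  intro a b hab
  exact Finset.sum_le_sum_of_subset (Finset.Icc_subset_Icc_right hab)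

lemma countUpTo_N (η : Conf N) : countUpTo η N = numParticles η := by
  unfold countUpTo numParticles
  rw [Finset.card_filter]
  refine Finset.sum_nbij' (fun a => ((a : ℕ) : ZMod N)) (fun x => repN x) ?_ ?_ ?_ ?_ ?_
  · intro a _; exact Finset.mem_univ _
  · intro x _
    simp only [Finset.mem_Icc]
    exact ⟨(repN_le x).1, (repN_le x).2⟩
  · intro a ha
    simp only [Finset.mem_Icc] at ha
    exact repN_cast ha.1 ha.2
  · intro x _; exact cast_repN x
  · intro a _; rfl

end Aux2
section Aux3
set_option linter.unusedSectionVars false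

variable {N K : ℕ} [NeZero N] [NeZero K]

lemma repOne_bounds (m : ZMod K) : 1 ≤ repOne m ∧ repOne m ≤ K := by
  unfold repOne
  have := ZMod.val_lt m
  have := NeZero.pos K
  split <;> omega

lemma repOne_inj {m m' : ZMod K} (h : repOne m = repOne m') : m = m' := by
  have hv := ZMod.val_lt m
  have hv' := ZMod.val_lt m'
  unfold repOne at h
  have : m.val = m'.val := by split at h <;> split at h <;> omega
  exact ZMod.val_injective _ this

/-- intermediate value for counting functions -/
lemma exists_count (η : Conf N) (n r : ℕ) (hr : r ≤ countUpTo η n) :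
    ∃ x, x ≤ n ∧ countUpTo η x = r := by
  induction n with
  | zero => exact ⟨0, le_refl 0, by rw [countUpTo_zero] at hr ⊢; omega⟩
  | succ n ih =>
    by_cases h : r ≤ countUpTo η n
    · obtain ⟨x, hx1, hx2⟩ := ih h
      exact ⟨x, by omega, hx2⟩
    · refine ⟨n + 1, le_refl _, ?_⟩
      rw [countUpTo_succ] at hr ⊢
      by_cases hi : η (((n + 1 : ℕ) : ZMod N)) = true
      · rw [if_pos hi] at hr ⊢; omega
      · rw [if_neg hi] at hr ⊢; omega

lemma countUpTo_pred (η : Conf N) {P : ℕ} (h : 1 ≤ P) :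
    countUpTo η P = countUpTo η (P - 1) + (if η ((P : ℕ) : ZMod N) = true then 1 else 0) := by
  cases P with
  | zero => omega
  | succ Q => simp only [Nat.succ_sub_one]; exact countUpTo_succ η Q

variable (η : Conf N) (hcard : numParticles η = K) (hKN : K ≤ N)

include hcard hKN in
lemma pos_set_nonempty (m : ZMod K) :
    {x : ℕ | 1 ≤ x ∧ x ≤ N ∧ countUpTo η x = repOne m}.Nonempty := by
  have hb := repOne_bounds m
  have hN := countUpTo_N η
  obtain ⟨x, hx1, hx2⟩ := exists_count η N (repOne m) (by omega)
  refine ⟨x, ?_, hx1, hx2⟩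
  rcases Nat.eq_zero_or_pos x with h | h
  · subst h; rw [countUpTo_zero] at hx2; omega
  · exact h

include hcard hKN in
lemma pos_spec (m : ZMod K) :
    1 ≤ pos η m ∧ pos η m ≤ N ∧ countUpTo η (pos η m) = repOne m :=
  Nat.sInf_mem (pos_set_nonempty η hcard hKN m)

lemma pos_le {z : ℕ} (m : ZMod K) (h1 : 1 ≤ z) (h2 : z ≤ N) (h3 : countUpTo η z = repOne m) :
    pos η m ≤ z :=
  Nat.sInf_le ⟨h1, h2, h3⟩

include hcard hKN in
lemma pos_pred (m : ZMod K) :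
    η ((pos η m : ℕ) : ZMod N) = true ∧ countUpTo η (pos η m - 1) = repOne m - 1 := by
  obtain ⟨h1, h2, h3⟩ := pos_spec η hcard hKN m
  have hb := repOne_bounds (K := K) m
  have hc := countUpTo_pred η h1
  by_cases hocc : η ((pos η m : ℕ) : ZMod N) = true
  · refine ⟨hocc, ?_⟩
    rw [hc, if_pos hocc] at h3
    omega
  · exfalso
    rw [hc, if_neg hocc] at h3
    rw [add_zero] at h3
    -- countUpTo η (pos η m - 1) = repOne m, contradiction with minimality
    rcases Nat.eq_zero_or_pos (pos η m - 1) with h0 | h0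
    · rw [h0, countUpTo_zero] at h3; omega
    · have := pos_le η m h0 (by omega) h3
      omega

include hcard hKN in
lemma pos_occ (m : ZMod K) : η ((pos η m : ℕ) : ZMod N) = true :=
  (pos_pred η hcard hKN m).1

include hcard hKN in
lemma pos_rank {y : ZMod N} (hy : η y = true) : pos η (rankOf K y η) = repN y := by
  obtain ⟨hr1, hr2⟩ := repN_le y
  have hcy : countUpTo η (repN y) = countUpTo η (repN y - 1) + 1 := by
    have hP : repN y = (repN y - 1) + 1 := by omega
    rw [hP, countUpTo_succ, ← hP, cast_repN, if_pos hy]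
  have hub : countUpTo η (repN y) ≤ K := by
    have h := countUpTo_mono η hr2
    rwa [countUpTo_N, hcard] at h
  have hlb : 1 ≤ countUpTo η (repN y) := by omega
  have hrep : repOne (rankOf K y η) = countUpTo η (repN y) := by
    unfold rankOf repOne
    rw [ZMod.val_natCast]
    rcases eq_or_lt_of_le hub with h | h
    · rw [h]; simp [Nat.mod_self]
    · rw [Nat.mod_eq_of_lt h]
      split <;> omega
  -- repN y is in the set and is minimal
  refine le_antisymm (pos_le η _ hr1 hr2 hrep.symm) ?_
  by_contra hlt
  push_neg at hlt
  obtain ⟨h1, h2, h3⟩ := pos_spec η hcard hKN (rankOf K y η)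
  have : countUpTo η (pos η (rankOf K y η)) ≤ countUpTo η (repN y - 1) :=
    countUpTo_mono η (by omega)
  omega

end Aux3
/-- The next occupied site, clockwise (for ergodic configurations). -/
def stepc {N : ℕ} (η : Conf N) (w : ZMod N) : ZMod N :=
  if η (w + 1) = true then w + 1 else w + 2

section Aux4
set_option linter.unusedSectionVars false

variable {N K : ℕ} [NeZero N] [NeZero K]

lemma pos_cast_inj (η : Conf N) (hcard : numParticles η = K) (hKN : K ≤ N) {m m' : ZMod K}
    (h : ((pos η m : ℕ) : ZMod N) = ((pos η m' : ℕ) : ZMod N)) : m = m' := by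
  obtain ⟨a1, a2, a3⟩ := pos_spec η hcard hKN m
  obtain ⟨b1, b2, b3⟩ := pos_spec η hcard hKN m'
  have := cast_inj_on a1 a2 b1 b2 h
  apply repOne_inj (K := K)
  rw [← a3, ← b3, this]

lemma pos_succ (η : Conf N) (hcard : numParticles η = K) (herg : isErgodic η)
    (hKN : K < N) (hK2 : 2 ≤ K) (m : ZMod K) :
    ((pos η (m + 1) : ℕ) : ZMod N) = stepc η ((pos η m : ℕ) : ZMod N) := by
  have hKN' : K ≤ N := le_of_lt hKN
  have hN3 : 3 ≤ N := by omega
  haveI : Fact (1 < K) := ⟨by omega⟩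
  obtain ⟨h1, h2, h3⟩ := pos_spec η hcard hKN' m
  have hb := repOne_bounds (K := K) m
  have hcN : countUpTo η N = K := by rw [countUpTo_N, hcard]
  by_cases hrK : repOne m < K
  · -- generic case: the (r+1)-th particle is within 1..N after P
    have hm_ne : m.val ≠ 0 := by
      intro hv
      unfold repOne at hrK
      rw [if_pos hv] at hrK
      omega
    have hval1 : (m + 1).val = (m.val + 1) % K := by rw [ZMod.val_add, ZMod.val_one]
    have hrep1 : repOne (m + 1) = repOne m + 1 := by
      unfold repOne
      rw [hval1, if_neg hm_ne]
      by_cases hc : m.val + 1 = K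
      · rw [hc, Nat.mod_self, if_pos rfl]
      · have hlt : m.val + 1 < K := by have := ZMod.val_lt m; omega
        rw [Nat.mod_eq_of_lt hlt, if_neg (by omega)]
    have hPN : pos η m < N := by
      rcases eq_or_lt_of_le h2 with h | h
      · exfalso; rw [h, hcN] at h3; omega
      · exact h
    by_cases hnext : η (((pos η m + 1 : ℕ)) : ZMod N) = true
    · have hc1 : countUpTo η (pos η m + 1) = repOne m + 1 := by
        rw [countUpTo_succ, if_pos hnext, h3]
      have hpos : pos η (m + 1) = pos η m + 1 := by
        refine le_antisymm (pos_le η _ (by omega) (by omega) (by rw [hc1, hrep1])) ?_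
        by_contra hlt
        push_neg at hlt
        obtain ⟨g1, g2, g3⟩ := pos_spec η hcard hKN' (m + 1)
        have hmono : countUpTo η (pos η (m + 1)) ≤ countUpTo η (pos η m) :=
          countUpTo_mono η (by omega)
        rw [g3, hrep1, h3] at hmono
        omega
      rw [hpos]
      unfold stepc
      rw [show ((pos η m : ℕ) : ZMod N) + 1 = (((pos η m + 1 : ℕ)) : ZMod N) by push_cast; ring,
        if_pos hnext]
    · have hc1 : countUpTo η (pos η m + 1) = repOne m := by
        rw [countUpTo_succ, if_neg hnext, h3, add_zero]
      have hPN1 : pos η m + 1 < N := by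
        by_contra hge
        push_neg at hge
        have : pos η m + 1 = N := by omega
        rw [this, hcN] at hc1
        omega
      have hnext2 : η (((pos η m + 2 : ℕ)) : ZMod N) = true := by
        rcases herg (((pos η m + 1 : ℕ)) : ZMod N) with h | h
        · exact absurd h hnext
        · rwa [show ((pos η m + 1 : ℕ) : ZMod N) + 1 = ((pos η m + 2 : ℕ) : ZMod N) by
            push_cast; ring] at h
      have hc2 : countUpTo η (pos η m + 2) = repOne m + 1 := by
        rw [show pos η m + 2 = (pos η m + 1) + 1 from rfl, countUpTo_succ, hc1, if_pos hnext2]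
      have hpos : pos η (m + 1) = pos η m + 2 := by
        refine le_antisymm (pos_le η _ (by omega) (by omega) (by rw [hc2, hrep1])) ?_
        by_contra hlt
        push_neg at hlt
        obtain ⟨g1, g2, g3⟩ := pos_spec η hcard hKN' (m + 1)
        have hmono : countUpTo η (pos η (m + 1)) ≤ countUpTo η (pos η m + 1) :=
          countUpTo_mono η (by omega)
        rw [g3, hrep1, hc1] at hmono
        omega
      rw [hpos]
      unfold stepc
      rw [show ((pos η m : ℕ) : ZMod N) + 1 = (((pos η m + 1 : ℕ)) : ZMod N) by push_cast; ring,
        if_neg hnext]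
      push_cast; ring
  · -- wrap-around case: repOne m = K
    have hrK' : repOne m = K := by omega
    have hm0 : m.val = 0 := by
      by_contra h
      unfold repOne at hrK'
      rw [if_neg h] at hrK'
      have := ZMod.val_lt m
      omega
    have hrep1 : repOne (m + 1) = 1 := by
      have hv : (m + 1).val = 1 := by
        rw [ZMod.val_add, ZMod.val_one, hm0]
        exact Nat.mod_eq_of_lt (by omega)
      unfold repOne
      rw [hv]
      simp
    have htail : ∀ u, pos η m < u → u ≤ N → η ((u : ℕ) : ZMod N) = false := by
      intro u hu1 hu2
      have hcu : countUpTo η u = K := by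
        refine le_antisymm (by rw [← hcN]; exact countUpTo_mono η hu2) ?_
        rw [← hrK', ← h3]
        exact countUpTo_mono η (by omega)
      have hcu1 : countUpTo η (u - 1) = K := by
        refine le_antisymm (by rw [← hcN]; exact countUpTo_mono η (by omega)) ?_
        rw [← hrK', ← h3]
        exact countUpTo_mono η (by omega)
      have hp := countUpTo_pred η (show 1 ≤ u by omega)
      rw [hcu, hcu1] at hp
      cases hoc : η ((u : ℕ) : ZMod N)
      · rfl
      · rw [if_pos hoc] at hp; omega
    have hP_ge : pos η m = N ∨ pos η m + 1 = N := by
      by_contra hc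
      push_neg at hc
      have e1 := htail (pos η m + 1) (by omega) (by omega)
      have e2 := htail (pos η m + 2) (by omega) (by omega)
      rcases herg (((pos η m + 1 : ℕ)) : ZMod N) with h | h
      · rw [e1] at h; exact Bool.false_ne_true h
      · rw [show ((pos η m + 1 : ℕ) : ZMod N) + 1 = ((pos η m + 2 : ℕ) : ZMod N) by
          push_cast; ring, e2] at h
        exact Bool.false_ne_true h
    have hposlb : 1 ≤ pos η (m + 1) := (pos_spec η hcard hKN' (m + 1)).1
    rcases hP_ge with hPN | hPN
    · -- pos η m = N ; cast = 0
      have hc0 : ((pos η m : ℕ) : ZMod N) = 0 := by rw [hPN]; exact ZMod.natCast_self N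
      by_cases hfirst : η ((1 : ℕ) : ZMod N) = true
      · have hc1 : countUpTo η 1 = 1 := by
          rw [show (1 : ℕ) = 0 + 1 from rfl, countUpTo_succ, countUpTo_zero, if_pos hfirst]
        have hpos : pos η (m + 1) = 1 :=
          le_antisymm (pos_le η _ (le_refl 1) (by omega) (by rw [hc1, hrep1])) hposlb
        rw [hpos]
        unfold stepc
        rw [hc0, show (0 : ZMod N) + 1 = ((1 : ℕ) : ZMod N) by push_cast; ring, if_pos hfirst]
      · have hsecond : η ((2 : ℕ) : ZMod N) = true := by
          rcases herg ((1 : ℕ) : ZMod N) with h | h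
          · exact absurd h hfirst
          · rwa [show ((1 : ℕ) : ZMod N) + 1 = ((2 : ℕ) : ZMod N) by push_cast; ring] at h
        have hc1 : countUpTo η 1 = 0 := by
          rw [show (1 : ℕ) = 0 + 1 from rfl, countUpTo_succ, countUpTo_zero, if_neg hfirst]
        have hc2 : countUpTo η 2 = 1 := by
          rw [show (2 : ℕ) = 1 + 1 from rfl, countUpTo_succ, hc1, if_pos hsecond]
        have hpos : pos η (m + 1) = 2 := by
          refine le_antisymm (pos_le η _ (by omega) (by omega) (by rw [hc2, hrep1])) ?_
          by_contra hlt
          push_neg at hlt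
          obtain ⟨g1, g2, g3⟩ := pos_spec η hcard hKN' (m + 1)
          have : pos η (m + 1) = 1 := by omega
          rw [this, hc1, hrep1] at g3
          omega
        rw [hpos]
        unfold stepc
        rw [hc0, show (0 : ZMod N) + 1 = ((1 : ℕ) : ZMod N) by push_cast; ring, if_neg hfirst]
        push_cast; ring
    · -- pos η m + 1 = N
      have e1 : η ((N : ℕ) : ZMod N) = false := htail N (by omega) (le_refl N)
      have hfirst : η ((1 : ℕ) : ZMod N) = true := by
        rcases herg ((N : ℕ) : ZMod N) with h | h
        · rw [e1] at h; exact absurd h Bool.false_ne_true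
        · rwa [ZMod.natCast_self, zero_add, ← Nat.cast_one] at h
      have hc1 : countUpTo η 1 = 1 := by
        rw [show (1 : ℕ) = 0 + 1 from rfl, countUpTo_succ, countUpTo_zero, if_pos hfirst]
      have hpos : pos η (m + 1) = 1 :=
        le_antisymm (pos_le η _ (le_refl 1) (by omega) (by rw [hc1, hrep1])) hposlb
      rw [hpos]
      unfold stepc
      have hcast1 : ((pos η m : ℕ) : ZMod N) + 1 = 0 := by
        rw [show ((pos η m : ℕ) : ZMod N) + 1 = ((pos η m + 1 : ℕ) : ZMod N) by push_cast; ring,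
          hPN, ZMod.natCast_self]
      have e0 : η (0 : ZMod N) = false := by rwa [ZMod.natCast_self] at e1
      rw [hcast1, if_neg (by simp [e0])]
      rw [show ((pos η m : ℕ) : ZMod N) + 2 = (((pos η m : ℕ) : ZMod N) + 1) + 1 by ring,
        hcast1, zero_add, Nat.cast_one]

end Aux4
section Aux5
set_option linter.unusedSectionVars false

variable {N K : ℕ} [NeZero N] [NeZero K]

lemma one_ne_zeroN (h : 2 ≤ N) : (1 : ZMod N) ≠ 0 := by
  haveI : Fact (1 < N) := ⟨by omega⟩
  intro he
  have := congrArg ZMod.val he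
  rw [ZMod.val_one, ZMod.val_zero] at this
  omega

lemma two_ne_zeroN (h : 3 ≤ N) : (2 : ZMod N) ≠ 0 := by
  intro he
  have h2 : ((2 : ℕ) : ZMod N).val = 2 := ZMod.val_cast_of_lt (by omega)
  rw [show ((2 : ℕ) : ZMod N) = (2 : ZMod N) by push_cast; ring, he, ZMod.val_zero] at h2
  omega

lemma one_ne_twoN (h : 3 ≤ N) : (1 : ZMod N) ≠ 2 := by
  intro he
  have := congrArg (fun t : ZMod N => t - 1) he
  simp only [sub_self] at this
  rw [show (2 : ZMod N) - 1 = 1 by ring] at this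
  exact one_ne_zeroN (by omega) this.symm

lemma add_one_neN (h : 2 ≤ N) (a : ZMod N) : a + 1 ≠ a := by
  intro he
  have : (1 : ZMod N) = 0 := by
    have := congrArg (fun t : ZMod N => t - a) he
    simpa [add_comm, add_sub_cancel_right] using this
  exact one_ne_zeroN h this

lemma add_two_neN (h : 3 ≤ N) (a : ZMod N) : a + 2 ≠ a := by
  intro he
  have : (2 : ZMod N) = 0 := by
    have := congrArg (fun t : ZMod N => t - a) he
    simpa [add_comm, add_sub_cancel_right] using this
  exact two_ne_zeroN h this

lemma cdist_add_one (h : 2 ≤ N) (a : ZMod N) : cdist a (a + 1) = 1 := by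
  haveI : Fact (1 < N) := ⟨by omega⟩
  unfold cdist
  rw [show a + 1 - a = 1 by ring, ZMod.val_one]
  simp

lemma cdist_add_two (h : 3 ≤ N) (a : ZMod N) : cdist a (a + 2) = 2 := by
  unfold cdist
  rw [show a + 2 - a = 2 by ring,
    show (2 : ZMod N) = ((2 : ℕ) : ZMod N) by push_cast; ring,
    ZMod.val_cast_of_lt (by omega)]
  simp

variable (η : Conf N) (hcard : numParticles η = K) (herg : isErgodic η)
  (hKN : K < N) (hK2 : 2 ≤ K)

include hcard herg hKN hK2 in
lemma sigma_eq (k l : ZMod K) :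
    sigmaConf η k l = η (((pos η (k + l - 1) : ℕ) : ZMod N) + 1) := by
  have hN3 : 3 ≤ N := by omega
  unfold sigmaConf
  have hstep : ((pos η (k + l) : ℕ) : ZMod N) = stepc η ((pos η (k + l - 1) : ℕ) : ZMod N) := by
    have := pos_succ η hcard herg hKN hK2 (k + l - 1)
    rwa [sub_add_cancel] at this
  rw [hstep]
  set w := ((pos η (k + l - 1) : ℕ) : ZMod N) with hw
  unfold stepc
  by_cases hocc : η (w + 1) = true
  · rw [if_pos hocc, cdist_add_one (by omega), hocc]
    simp
  · have hocc' : η (w + 1) = false := by simpa using hocc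
    rw [if_neg hocc, cdist_add_two hN3, hocc']
    simp

include hcard herg hKN hK2 in
lemma sigma_before (k : ZMod K) {y : ZMod N} (hy : η y = true) :
    sigmaConf η k (rankOf K y η - k) = η (y - 1) := by
  rw [sigma_eq η hcard herg hKN hK2, show k + (rankOf K y η - k) - 1 = rankOf K y η - 1 by ring]
  set w := ((pos η (rankOf K y η - 1) : ℕ) : ZMod N) with hwdef
  have hw : η w = true := pos_occ η hcard (le_of_lt hKN) _
  have hstep : stepc η w = y := by
    have h := pos_succ η hcard herg hKN hK2 (rankOf K y η - 1)
    rw [sub_add_cancel, pos_rank η hcard (le_of_lt hKN) hy, cast_repN] at h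
    exact h.symm
  unfold stepc at hstep
  by_cases hc : η (w + 1) = true
  · rw [if_pos hc] at hstep
    rw [← hstep, add_sub_cancel_right, hc, hw]
  · have hcf : η (w + 1) = false := by simpa using hc
    rw [if_neg hc] at hstep
    rw [hcf, ← hstep, show w + 2 - 1 = w + 1 by ring, hcf]

include hcard herg hKN hK2 in
lemma sigma_after (k : ZMod K) {y : ZMod N} (hy : η y = true) :
    sigmaConf η k (rankOf K y η - k + 1) = η (y + 1) := by
  rw [sigma_eq η hcard herg hKN hK2,
    show k + (rankOf K y η - k + 1) - 1 = rankOf K y η by ring,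
    pos_rank η hcard (le_of_lt hKN) hy, cast_repN]

end Aux5

section Aux6
set_option linter.unusedSectionVars false

variable {α : Type*} [DecidableEq α]

lemma swapConf_left (η : α → Bool) (a b : α) : swapConf η a b a = η b := by
  unfold swapConf; simp

lemma swapConf_right (η : α → Bool) {a b : α} (h : b ≠ a) : swapConf η a b b = η a := by
  unfold swapConf; rw [if_neg h, if_pos rfl]

lemma swapConf_other (η : α → Bool) {a b u : α} (h1 : u ≠ a) (h2 : u ≠ b) :
    swapConf η a b u = η u := by
  unfold swapConf; rw [if_neg h1, if_neg h2]

lemma swapConf_id (η : α → Bool) {a b : α} (h : η a = η b) : swapConf η a b = η := by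
  funext u
  unfold swapConf
  split
  · next h1 => rw [h1, h]
  · split
    · next h2 => rw [h2, h]
    · rfl

lemma swapConf_eq_comp (η : α → Bool) (a b : α) :
    swapConf η a b = fun u => η (Equiv.swap a b u) := by
  funext u
  unfold swapConf
  rw [Equiv.swap_apply_def]
  split_ifs <;> rfl

end Aux6

section Aux7
set_option linter.unusedSectionVars false

variable {N K : ℕ} [NeZero N] [NeZero K]

lemma numParticles_swap (η : Conf N) (a b : ZMod N) :
    numParticles (swapConf η a b) = numParticles η := by
  unfold numParticles
  rw [swapConf_eq_comp]
  apply Finset.card_nbij' (i := fun u => Equiv.swap a b u) (j := fun u => Equiv.swap a b u)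
  · intro u hu
    simp only [Finset.mem_coe, Finset.mem_filter, Finset.mem_univ, true_and] at hu ⊢
    exact hu
  · intro u hu
    simp only [Finset.mem_coe, Finset.mem_filter, Finset.mem_univ, true_and] at hu ⊢
    rwa [Equiv.swap_apply_self]
  · intro u _; exact Equiv.swap_apply_self a b u
  · intro u _; exact Equiv.swap_apply_self a b u

lemma ergodic_move (hN3 : 3 ≤ N) (η : Conf N) (herg : isErgodic η) {y z : ZMod N}
    (hz : z = 1 ∨ z = -1) (hy : η y = true) (h1 : η (y - z) = true) (h0 : η (y + z) = false) :
    isErgodic (swapConf η y (y + z)) := by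
  have hzy : y + z ≠ y := by
    rcases hz with rfl | rfl
    · exact add_one_neN (by omega) y
    · intro he
      have : y = y + 1 := by
        have := congrArg (fun t : ZMod N => t + 1) he
        simpa using this
      exact add_one_neN (by omega) y this.symm
  intro u
  by_cases hu1 : u = y + z
  · left; rw [hu1, swapConf_right η hzy]; exact hy
  by_cases hu2 : u + 1 = y + z
  · right; rw [hu2, swapConf_right η hzy]; exact hy
  by_cases hu3 : u = y
  · rcases hz with rfl | rfl
    · exact absurd (by rw [hu3]) hu2
    · right
      have e1 : u + 1 ≠ y := by rw [hu3]; exact add_one_neN (by omega) y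
      have e2 : u + 1 ≠ y + -1 := hu2
      rw [swapConf_other η e1 e2, hu3]
      rw [show y - -1 = y + 1 by ring] at h1
      exact h1
  by_cases hu4 : u + 1 = y
  · rcases hz with rfl | rfl
    · left
      have e2 : u ≠ y + 1 := by
        intro he
        rw [he] at hu4
        have : (2 : ZMod N) = 0 := by
          have := congrArg (fun t : ZMod N => t - y) hu4
          simpa [add_assoc, one_add_one_eq_two] using this
        exact two_ne_zeroN hN3 this
      rw [swapConf_other η hu3 e2]
      have : u = y - 1 := by rw [← hu4]; ring
      rw [this]
      exact h1
    · exact absurd (by rw [← hu4]; ring) hu1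
  · have e1 := swapConf_other η hu3 hu1
    have e2 := swapConf_other η hu4 hu2
    rw [e1, e2]
    exact herg u

end Aux7
section Aux8
set_option linter.unusedSectionVars false

variable {N K : ℕ} [NeZero N] [NeZero K]

lemma add_z_neN (hN3 : 3 ≤ N) {z : ZMod N} (hz : z = 1 ∨ z = -1) (y : ZMod N) : y + z ≠ y := by
  rcases hz with rfl | rfl
  · exact add_one_neN (by omega) y
  · intro he
    have : y = y + 1 := by
      have := congrArg (fun t : ZMod N => t + 1) he
      simpa using this
    exact add_one_neN (by omega) y this.symm

lemma step_comm (hN3 : 3 ≤ N) (η : Conf N) (herg : isErgodic η) {y z : ZMod N}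
    (hz : z = 1 ∨ z = -1) (hy : η y = true) (h1 : η (y - z) = true) (h0 : η (y + z) = false)
    {w : ZMod N} (hw : η w = true) :
    stepc (swapConf η y (y + z)) (if w = y then y + z else w)
      = (if stepc η w = y then y + z else stepc η w) := by
  have hzy : y + z ≠ y := add_z_neN hN3 hz y
  have h2ne : ∀ a : ZMod N, a + 2 ≠ a := add_two_neN hN3
  have h1ne : ∀ a : ZMod N, a + 1 ≠ a := add_one_neN (by omega)
  set η' := swapConf η y (y + z) with hη'def
  have ηv1 : η' y = false := by rw [hη'def, swapConf_left, h0]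
  have ηv2 : η' (y + z) = true := by rw [hη'def, swapConf_right η hzy, hy]
  have ηv3 : ∀ u, u ≠ y → u ≠ y + z → η' u = η u := fun u a b => swapConf_other η a b
  rcases hz with rfl | rfl
  · -- right jump z = 1
    have h1' : η (y - 1) = true := h1
    have hy2 : η (y + 2) = true := by
      rcases herg (y + 1) with h | h
      · rw [h0] at h; exact absurd h Bool.false_ne_true
      · rwa [show y + 1 + 1 = y + 2 by ring] at h
    by_cases hwy : w = y
    · subst hwy
      rw [if_pos rfl]
      have hsy : stepc η w = w + 2 := by
        unfold stepc; rw [if_neg (by rw [h0]; simp)]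
      have hsy' : stepc η' (w + 1) = w + 2 := by
        unfold stepc
        have e : η' (w + 1 + 1) = true := by
          rw [show w + 1 + 1 = w + 2 by ring,
            ηv3 (w + 2) (h2ne w) (by intro he; exact h1ne (w + 1) (by
              rw [show w + 1 + 1 = w + 2 by ring, he])), hy2]
        rw [if_pos e, show w + 1 + 1 = w + 2 by ring]
      rw [hsy', hsy, if_neg (h2ne w)]
    · rw [if_neg hwy]
      by_cases hb : w + 1 = y
      · have hsy : stepc η w = w + 1 := by
          unfold stepc; rw [if_pos (by rw [hb]; exact hy)]
        have hsy' : stepc η' w = w + 2 := by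
          unfold stepc; rw [hb, if_neg (by rw [ηv1]; simp)]
        rw [hsy', hsy, hb, if_pos rfl, ← hb]
        ring
      · have e : η' (w + 1) = η (w + 1) :=
          ηv3 _ hb (fun he => hwy (by exact add_right_cancel he))
        by_cases hcc : η (w + 1) = true
        · have hsy : stepc η w = w + 1 := by unfold stepc; rw [if_pos hcc]
          have hsy' : stepc η' w = w + 1 := by unfold stepc; rw [e, if_pos hcc]
          rw [hsy', hsy, if_neg hb]
        · have hsy : stepc η w = w + 2 := by unfold stepc; rw [if_neg hcc]
          have hsy' : stepc η' w = w + 2 := by unfold stepc; rw [e, if_neg hcc]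
          have hw2 : w + 2 ≠ y := by
            intro he
            exact hcc (by rw [show w + 1 = y - 1 by rw [← he]; ring]; exact h1')
          rw [hsy', hsy, if_neg hw2]
  · -- left jump z = -1
    have h1' : η (y + 1) = true := by rw [show y + 1 = y - -1 by ring]; exact h1
    by_cases hwy : w = y
    · subst hwy
      rw [if_pos rfl]
      have hsy : stepc η w = w + 1 := by unfold stepc; rw [if_pos h1']
      have hsy' : stepc η' (w + -1) = w + 1 := by
        unfold stepc
        rw [show w + -1 + 1 = w by ring, if_neg (by rw [ηv1]; simp)]
        ring
      rw [hsy', hsy, if_neg (h1ne w)]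
    · rw [if_neg hwy]
      have hb : w + 1 ≠ y := by
        intro he
        have : w = y + -1 := by rw [← he]; ring
        rw [this, h0] at hw
        exact absurd hw Bool.false_ne_true
      by_cases hc : w + 2 = y
      · have hw1 : w + 1 = y + -1 := by rw [← hc]; ring
        have hsy : stepc η w = w + 2 := by
          unfold stepc; rw [hw1, if_neg (by rw [h0]; simp)]
        have hsy' : stepc η' w = w + 1 := by
          unfold stepc; rw [hw1, if_pos ηv2, ← hw1]
        rw [hsy', hsy, hc, if_pos rfl, ← hw1]
      · have e : η' (w + 1) = η (w + 1) := by
          refine ηv3 _ hb ?_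
          intro he
          exact hc (by rw [show w + 2 = w + 1 + 1 by ring, he]; ring)
        by_cases hcc : η (w + 1) = true
        · have hsy : stepc η w = w + 1 := by unfold stepc; rw [if_pos hcc]
          have hsy' : stepc η' w = w + 1 := by unfold stepc; rw [e, if_pos hcc]
          rw [hsy', hsy, if_neg hb]
        · have hsy : stepc η w = w + 2 := by unfold stepc; rw [if_neg hcc]
          have hsy' : stepc η' w = w + 2 := by unfold stepc; rw [e, if_neg hcc]
          rw [hsy', hsy, if_neg hc]

lemma pos_parallel (η η' : Conf N) (hcard : numParticles η = K) (hcard' : numParticles η' = K)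
    (herg : isErgodic η) (herg' : isErgodic η') (hKN : K < N) (hK2 : 2 ≤ K)
    (φ : ZMod N → ZMod N)
    (hcomm : ∀ w, η w = true → stepc η' (φ w) = φ (stepc η w))
    (m m' : ZMod K) (hbase : ((pos η' m' : ℕ) : ZMod N) = φ ((pos η m : ℕ) : ZMod N)) :
    ∀ j : ℕ, ((pos η' (m' + (j : ZMod K)) : ℕ) : ZMod N)
      = φ ((pos η (m + (j : ZMod K)) : ℕ) : ZMod N) := by
  intro j
  induction j with
  | zero => simpa using hbase
  | succ j ih =>
    rw [show m' + ((j + 1 : ℕ) : ZMod K) = (m' + (j : ZMod K)) + 1 by push_cast; ring,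
      show m + ((j + 1 : ℕ) : ZMod K) = (m + (j : ZMod K)) + 1 by push_cast; ring,
      pos_succ η' hcard' herg' hKN hK2, pos_succ η hcard herg hKN hK2, ih,
      hcomm _ (pos_occ η hcard (le_of_lt hKN) _)]

end Aux8
section Aux9
set_option linter.unusedSectionVars false

variable {N K : ℕ} [NeZero N] [NeZero K]

lemma sigma_swap (hN3 : 3 ≤ N) (hKN : K < N) (hK2 : 2 ≤ K)
    (η : Conf N) (hcard : numParticles η = K) (herg : isErgodic η)
    {y z x : ZMod N} (hz : z = 1 ∨ z = -1) (hy : η y = true)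
    (h1 : η (y - z) = true) (h0 : η (y + z) = false) (hx : η x = true) :
    sigmaConf (swapConf η y (y + z))
        (rankOf K (if x = y then y + z else x) (swapConf η y (y + z)))
      = swapConf (sigmaConf η (rankOf K x η))
          (rankOf K y η - rankOf K x η) (rankOf K y η - rankOf K x η + 1) := by
  have hKN' : K ≤ N := le_of_lt hKN
  have hzy : y + z ≠ y := add_z_neN hN3 hz y
  set η' := swapConf η y (y + z) with hη'def
  have hcard' : numParticles η' = K := by rw [hη'def, numParticles_swap, hcard]
  have herg' : isErgodic η' := ergodic_move hN3 η herg hz hy h1 h0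
  have ηv1 : η' y = false := by rw [hη'def, swapConf_left, h0]
  have ηv2 : η' (y + z) = true := by rw [hη'def, swapConf_right η hzy, hy]
  have ηv3 : ∀ u, u ≠ y → u ≠ y + z → η' u = η u := fun u a b => swapConf_other η a b
  set x₀ := if x = y then y + z else x with hx₀def
  have hx₀occ : η' x₀ = true := by
    by_cases hxy : x = y
    · rw [hx₀def, if_pos hxy]; exact ηv2
    · have hxz : x ≠ y + z := by
        intro he; rw [he, h0] at hx; exact absurd hx Bool.false_ne_true
      rw [hx₀def, if_neg hxy, ηv3 x hxy hxz]; exact hx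
  set k := rankOf K x η with hkdef
  set k' := rankOf K x₀ η' with hk'def
  set jj := rankOf K y η - k with hjjdef
  have hbase : ((pos η' k' : ℕ) : ZMod N)
      = (fun w => if w = y then y + z else w) ((pos η k : ℕ) : ZMod N) := by
    rw [hk'def, hkdef, pos_rank η' hcard' hKN' hx₀occ, cast_repN,
      pos_rank η hcard hKN' hx, cast_repN]
  have hpar := pos_parallel η η' hcard hcard' herg herg' hKN hK2
    (fun w => if w = y then y + z else w)
    (fun w hw => step_comm hN3 η herg hz hy h1 h0 hw) k k' hbase
  have hpy : ((pos η (rankOf K y η) : ℕ) : ZMod N) = y := by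
    rw [pos_rank η hcard hKN' hy, cast_repN]
  have hjjne : jj + 1 ≠ jj := add_one_neN (N := K) hK2 jj
  funext l
  have hval : ((l - 1).val : ZMod K) = l - 1 := ZMod.natCast_rightInverse _
  have hpl := hpar (l - 1).val
  rw [hval] at hpl
  -- hpl : cast (pos η' (k' + (l-1))) = φ (cast (pos η (k + (l-1))))
  have hL : sigmaConf η' k' l
      = η' ((if ((pos η (k + l - 1) : ℕ) : ZMod N) = y then y + z
          else ((pos η (k + l - 1) : ℕ) : ZMod N)) + 1) := by
    rw [sigma_eq η' hcard' herg' hKN hK2, show k' + l - 1 = k' + (l - 1) by ring, hpl,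
      show k + (l - 1) = k + l - 1 by ring]
  have hR : sigmaConf η k l = η (((pos η (k + l - 1) : ℕ) : ZMod N) + 1) :=
    sigma_eq η hcard herg hKN hK2 k l
  set q := ((pos η (k + l - 1) : ℕ) : ZMod N) with hqdef
  have hqocc : η q = true := pos_occ η hcard hKN' _
  have hstepq : ((pos η (k + l) : ℕ) : ZMod N) = stepc η q := by
    have := pos_succ η hcard herg hKN hK2 (k + l - 1)
    rwa [sub_add_cancel] at this
  have hbefore : sigmaConf η k jj = η (y - 1) := by
    rw [hjjdef, hkdef]; exact sigma_before η hcard herg hKN hK2 _ hy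
  have hafter : sigmaConf η k (jj + 1) = η (y + 1) := by
    rw [hjjdef, hkdef]; exact sigma_after η hcard herg hKN hK2 _ hy
  by_cases hl1 : l = jj + 1
  · -- q = y
    have hq_y : q = y := by
      rw [hqdef, show k + l - 1 = rankOf K y η by rw [hl1, hjjdef]; ring, hpy]
    rw [hL, hq_y, if_pos rfl, hl1, swapConf_right _ hjjne, hbefore]
    rcases hz with rfl | rfl
    · have hy2 : η (y + 2) = true := by
        rcases herg (y + 1) with h | h
        · rw [h0] at h; exact absurd h Bool.false_ne_true
        · rwa [show y + 1 + 1 = y + 2 by ring] at h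
      have hne21 : y + 2 ≠ y + 1 := by
        intro he
        apply add_one_neN (show 2 ≤ N by omega) (y + 1)
        rw [show y + 1 + 1 = y + 2 by ring, he]
      have e : η' (y + 1 + 1) = η (y + 2) := by
        rw [show y + 1 + 1 = y + 2 by ring]
        exact ηv3 _ (add_two_neN hN3 y) hne21
      rw [e, hy2, h1]
    · rw [show y + -1 + 1 = y by ring, ηv1, show y - 1 = y + -1 by ring, h0]
  · by_cases hl0 : l = jj
    · -- q is the particle just before y
      have hstep_y : stepc η q = y := by
        rw [← hstepq, show k + l = rankOf K y η by
          rw [hl0, hjjdef]; ring, hpy]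
      rw [hL, hl0, swapConf_left, hafter]
      rcases hz with rfl | rfl
      · -- q = y - 1
        have hqy : q = y - 1 := by
          unfold stepc at hstep_y
          by_cases hc : η (q + 1) = true
          · rw [if_pos hc] at hstep_y; rw [← hstep_y]; ring
          · rw [if_neg hc] at hstep_y
            exact absurd (by rw [show q + 1 = y - 1 by rw [← hstep_y]; ring]; exact h1) hc
        have hqney : q ≠ y := by
          rw [hqy]; intro he
          have h' : y = y + 1 := by
            have := congrArg (fun t : ZMod N => t + 1) he
            simpa [sub_add_cancel] using this
          exact add_one_neN (by omega) y h'.symm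
        rw [if_neg hqney, show q + 1 = y by rw [hqy]; ring, hη'def, swapConf_left]
      · -- q = y - 2
        have hqy : q = y - 2 := by
          unfold stepc at hstep_y
          by_cases hc : η (q + 1) = true
          · rw [if_pos hc] at hstep_y
            exfalso
            have hq' : q = y + -1 := by rw [← hstep_y]; ring
            rw [hq', h0] at hqocc
            exact absurd hqocc Bool.false_ne_true
          · rw [if_neg hc] at hstep_y; rw [← hstep_y]; ring
        have hqney : q ≠ y := by
          rw [hqy]; intro he
          have h' : y = y + 2 := by
            have := congrArg (fun t : ZMod N => t + 2) he
            simpa [sub_add_cancel] using this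
          exact add_two_neN hN3 y h'.symm
        rw [if_neg hqney, show q + 1 = y + -1 by rw [hqy]; ring, ηv2,
          show y + 1 = y - -1 by ring, h1]
    · -- generic index
      have hqney : q ≠ y := by
        intro he
        apply hl1
        have heq : k + l - 1 = rankOf K y η :=
          pos_cast_inj η hcard hKN' (he.trans hpy.symm)
        have : l - 1 = jj := by rw [hjjdef, ← heq]; ring
        rw [← this]; ring
      have hq1ney : q + 1 ≠ y := by
        intro he
        apply hl0
        have hcy : η (q + 1) = true := by rw [he]; exact hy
        have hst : stepc η q = y := by unfold stepc; rw [if_pos hcy, he]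
        have heq : k + l = rankOf K y η :=
          pos_cast_inj η hcard hKN' ((hstepq.trans hst).trans hpy.symm)
        rw [hjjdef, ← heq]; ring
      have hq1nez : q + 1 ≠ y + z := by
        rcases hz with rfl | rfl
        · intro he; exact hqney (add_right_cancel he)
        · intro he
          apply hl0
          have hq1f : η (q + 1) = false := by rw [he]; exact h0
          have hst : stepc η q = y := by
            unfold stepc
            rw [if_neg (by rw [hq1f]; simp), show q + 2 = q + 1 + 1 by ring, he]
            ring
          have heq : k + l = rankOf K y η :=
            pos_cast_inj η hcard hKN' ((hstepq.trans hst).trans hpy.symm)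
          rw [hjjdef, ← heq]; ring
      rw [hL, if_neg hqney, ηv3 _ hq1ney hq1nez, swapConf_other _ hl0 hl1, hR]

end Aux9
/-- **Dynamic mapping (intertwining).**  For `N ≥ 2`, `N/2 < K < N`, every
`g : (ℤ/Nℤ) × Γ_{K,2K−N} → ℝ` and every pair `(x,η)` with `η ∈ ℰ_{N,K}` and `η_x = 1`,
`L^{tag}(g ∘ Φ̃)(x,η) = (L^{c}g)(Φ̃(x,η))`, where `Φ̃(x,η) = (x, σ^{(r(x,η),η)})`. -/
theorem fep_dynamic_mapping_intertwining
    (N K : ℕ) [NeZero N] [NeZero K] (hN : 2 ≤ N) (h1 : N < 2 * K) (h2 : K < N)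
    (g : ZMod N × Conf K → ℝ) (x : ZMod N) (η : Conf N)
    (hη : numParticles η = K ∧ isErgodic η) (hx : η x = true) :
    Ltag (fun p => g (p.1, sigmaConf p.2 (rankOf K p.1 p.2))) x η
      = Lc g x (sigmaConf η (rankOf K x η)) := by
  classical
  obtain ⟨hcard, herg⟩ := hη
  have hK2 : 2 ≤ K := by omega
  have hN3 : 3 ≤ N := by omega
  have hKN' : K ≤ N := le_of_lt h2
  set f : ZMod N × Conf N → ℝ := fun p => g (p.1, sigmaConf p.2 (rankOf K p.1 p.2)) with hfdef
  set k := rankOf K x η with hkdef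
  set σ := sigmaConf η k with hσdef
  have hpx : ((pos η k : ℕ) : ZMod N) = x := by
    rw [hkdef, pos_rank η hcard hKN' hx, cast_repN]
  have hfxη : f (x, η) = g (x, σ) := rfl
  have hKcast : ((K : ℕ) : ZMod K) = 0 := ZMod.natCast_self K
  have h1cast : ((1 : ℕ) : ZMod K) = 1 := Nat.cast_one
  have hσ0 : σ (0 : ZMod K) = η (x - 1) := by
    have := sigma_before η hcard herg h2 hK2 k (y := x) hx
    rwa [← hkdef, sub_self] at this
  have hσ1 : σ (1 : ZMod K) = η (x + 1) := by
    have := sigma_after η hcard herg h2 hK2 k (y := x) hx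
    rwa [← hkdef, sub_self, zero_add] at this
  unfold Ltag Lc
  congr 1
  · -- exchange part
    have hsub : (Finset.univ.filter (fun y : ZMod N => η y = true ∧ y ≠ x))
        ⊆ Finset.univ.filter (fun y : ZMod N => y ≠ x) := by
      intro u hu
      simp only [Finset.mem_filter, Finset.mem_univ, true_and] at hu ⊢
      exact hu.2
    refine Eq.trans (Finset.sum_subset hsub ?_).symm ?_
    · intro u hu hnu
      simp only [Finset.mem_filter, Finset.mem_univ, true_and] at hu hnu
      have hocc : ¬η u = true := fun ht => hnu ⟨ht, hu⟩
      exact Finset.sum_eq_zero (fun s _ => if_neg (fun hcon => hocc hcon.1))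
    refine Finset.sum_nbij' (i := fun y : ZMod N => (rankOf K y η - k).val)
      (j := fun j : ℕ => ((pos η (k + (j : ZMod K)) : ℕ) : ZMod N)) ?_ ?_ ?_ ?_ ?_
    · -- maps into Ico 1 K
      intro y hy
      simp only [Finset.mem_filter, Finset.mem_univ, true_and] at hy
      simp only [Finset.mem_Ico]
      refine ⟨?_, ZMod.val_lt _⟩
      by_contra hv
      push_neg at hv
      have hv0 : (rankOf K y η - k).val = 0 := by omega
      have : rankOf K y η = k := by
        have := (ZMod.val_eq_zero _).mp hv0
        have h' := sub_eq_zero.mp this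
        exact h'
      have hyx : y = x := by
        have e1 : ((pos η (rankOf K y η) : ℕ) : ZMod N) = y := by
          rw [pos_rank η hcard hKN' hy.1, cast_repN]
        rw [this, hpx] at e1
        exact e1.symm
      exact hy.2 hyx
    · -- maps into the filter
      intro j hj
      simp only [Finset.mem_Ico] at hj
      simp only [Finset.mem_filter, Finset.mem_univ, true_and]
      refine ⟨pos_occ η hcard hKN' _, ?_⟩
      intro he
      have := pos_cast_inj η hcard hKN' (he.trans hpx.symm)
      have hj0 : ((j : ℕ) : ZMod K) = 0 := by
        have h' := sub_eq_zero.mpr this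
        rwa [add_sub_cancel_left] at h'
      have : j % K = 0 := by
        have := congrArg ZMod.val hj0
        rwa [ZMod.val_natCast, ZMod.val_zero] at this
      rw [Nat.mod_eq_of_lt hj.2] at this
      omega
    · -- left inverse
      intro y hy
      simp only [Finset.mem_filter, Finset.mem_univ, true_and] at hy
      beta_reduce
      rw [show (((rankOf K y η - k).val : ℕ) : ZMod K) = rankOf K y η - k from
          ZMod.natCast_rightInverse _,
        show k + (rankOf K y η - k) = rankOf K y η by ring,
        pos_rank η hcard hKN' hy.1, cast_repN]
    · -- right inverse
      intro j hj
      simp only [Finset.mem_Ico] at hj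
      have hocc := pos_occ η hcard hKN' (k + (j : ZMod K))
      have e1 : rankOf K (((pos η (k + (j : ZMod K)) : ℕ) : ZMod N)) η = k + (j : ZMod K) := by
        apply pos_cast_inj η hcard hKN'
        rw [pos_rank η hcard hKN' hocc, cast_repN]
      beta_reduce
      rw [e1, show k + ((j : ℕ) : ZMod K) - k = ((j : ℕ) : ZMod K) by ring,
        ZMod.val_natCast, Nat.mod_eq_of_lt hj.2]
    · -- equality of the summands
      intro y hy
      simp only [Finset.mem_filter, Finset.mem_univ, true_and] at hy
      obtain ⟨hyo, hyx⟩ := hy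
      set jj := rankOf K y η - k with hjjdef
      have hc1 : ((jj.val : ℕ) : ZMod K) = jj := ZMod.natCast_rightInverse _
      have hc2 : ((jj.val + 1 : ℕ) : ZMod K) = jj + 1 := by push_cast; rw [hc1]
      rw [hc1, hc2]
      have hbef : σ jj = η (y - 1) := by
        rw [hσdef, hjjdef, hkdef]
        exact sigma_before η hcard herg h2 hK2 _ hyo
      have haft : σ (jj + 1) = η (y + 1) := by
        rw [hσdef, hjjdef, hkdef]
        exact sigma_after η hcard herg h2 hK2 _ hyo
      rw [Fintype.sum_bool]
      simp only [Bool.false_eq_true, if_true, if_false]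
      simp only [show y - (-1 : ZMod N) = y + 1 by ring, show y + (-1 : ZMod N) = y - 1 by ring]
      have hxny : x ≠ y := fun he => hyx he.symm
      by_cases hm : η (y - 1) = true <;> by_cases hp : η (y + 1) = true
      · rw [if_neg (fun hcon => by rw [hp] at hcon; simp at hcon),
          if_neg (fun hcon => by rw [hm] at hcon; simp at hcon),
          swapConf_id σ (by rw [hbef, haft, hm, hp])]
        simp
      · have hpf : η (y + 1) = false := by simpa using hp
        rw [if_pos ⟨hyo, hm, hpf⟩, if_neg (fun hcon => by rw [hpf] at hcon; simp at hcon)]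
        have hS := sigma_swap hN3 h2 hK2 η hcard herg (y := y) (z := 1) (Or.inl rfl) hyo hm hpf hx
        rw [if_neg hxny, ← hkdef, ← hσdef, ← hjjdef] at hS
        have hfv : f (x, swapConf η y (y + 1)) = g (x, swapConf σ jj (jj + 1)) := by
          rw [hfdef]; exact congrArg g (by rw [hS])
        rw [hfv, hfxη]
        ring
      · have hmf : η (y - 1) = false := by simpa using hm
        rw [if_neg (fun hcon => by rw [hmf] at hcon; simp at hcon), if_pos ⟨hyo, hp, hmf⟩]
        have hS := sigma_swap hN3 h2 hK2 η hcard herg (y := y) (z := -1) (Or.inr rfl) hyo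
          (by rw [show y - (-1 : ZMod N) = y + 1 by ring]; exact hp)
          (by rw [show y + (-1 : ZMod N) = y - 1 by ring]; exact hmf) hx
        rw [if_neg hxny, ← hkdef, ← hσdef, ← hjjdef,
          show y + (-1 : ZMod N) = y - 1 by ring] at hS
        have hfv : f (x, swapConf η y (y - 1)) = g (x, swapConf σ jj (jj + 1)) := by
          rw [hfdef]; exact congrArg g (by rw [hS])
        rw [hfv, hfxη]
        ring
      · have hpf : η (y + 1) = false := by simpa using hp
        have hmf : η (y - 1) = false := by simpa using hm
        rw [if_neg (fun hcon => by rw [hmf] at hcon; simp at hcon),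
          if_neg (fun hcon => by rw [hpf] at hcon; simp at hcon),
          swapConf_id σ (by rw [hbef, haft, hmf, hpf])]
        simp
  · -- tagged part = boundary term
    rw [Fintype.sum_bool]
    simp only [Bool.false_eq_true, if_true, if_false, hKcast, h1cast, hσ0, hσ1]
    simp only [show x - (-1 : ZMod N) = x + 1 by ring, show x + (-1 : ZMod N) = x - 1 by ring]
    by_cases hb : η (x - 1) = true <;> by_cases hf : η (x + 1) = true
    · -- both neighbours occupied: nothing moves
      rw [if_neg (fun hcon => by rw [hf] at hcon; simp at hcon),
        if_neg (fun hcon => by rw [hb] at hcon; simp at hcon),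
        if_pos hb, if_pos hf, swapConf_id σ (by rw [hσ0, hσ1, hb, hf])]
      simp
    · -- jump to the right
      have hff : η (x + 1) = false := by simpa using hf
      rw [if_pos ⟨hb, hff⟩, if_neg (fun hcon => by rw [hff] at hcon; simp at hcon),
        if_pos hb, if_neg hf]
      have hS := sigma_swap hN3 h2 hK2 η hcard herg (y := x) (z := 1) (Or.inl rfl) hx hb hff hx
      rw [if_pos rfl, ← hkdef, sub_self, zero_add] at hS
      have hfv : f (x + 1, swapConf η x (x + 1)) = g (x + 1, swapConf σ 0 1) := by
        rw [hfdef]; exact congrArg g (by rw [hS])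
      rw [hfv, hfxη, show ((1 - 0 : ℤ) : ZMod N) = 1 by push_cast; ring]
      ring
    · -- jump to the left
      have hbf : η (x - 1) = false := by simpa using hb
      rw [if_neg (fun hcon => by rw [hbf] at hcon; simp at hcon), if_pos ⟨hf, hbf⟩,
        if_neg hb, if_pos hf]
      have hS := sigma_swap hN3 h2 hK2 η hcard herg (y := x) (z := -1) (Or.inr rfl) hx
        (by rw [show x - (-1 : ZMod N) = x + 1 by ring]; exact hf)
        (by rw [show x + (-1 : ZMod N) = x - 1 by ring]; exact hbf) hx
      rw [if_pos rfl, ← hkdef, sub_self, zero_add,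
        show x + (-1 : ZMod N) = x - 1 by ring] at hS
      have hfv : f (x - 1, swapConf η x (x - 1)) = g (x - 1, swapConf σ 0 1) := by
        rw [hfdef]; exact congrArg g (by rw [hS])
      rw [hfv, hfxη, show ((0 - 1 : ℤ) : ZMod N) = -1 by push_cast; ring,
        show x + (-1 : ZMod N) = x - 1 by ring]
      ring
    · -- both neighbours empty
      have hff : η (x + 1) = false := by simpa using hf
      have hbf : η (x - 1) = false := by simpa using hb
      rw [if_neg (fun hcon => by rw [hbf] at hcon; simp at hcon),
        if_neg (fun hcon => by rw [hff] at hcon; simp at hcon),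
        if_neg hb, if_neg hf, swapConf_id σ (by rw [hσ0, hσ1, hbf, hff])]
      simp

end
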